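/- Let C be a real symmetric invertible d×d matrix and Z₀ a real symmetric positive definite d×d matrix, and let Z(t) = e^{2Ct} (Z₀⁻¹ + 4∫₀ᵗ e^{4Cs} ds)⁻¹ e^{2Ct} be the solution of the Riccati equation Z′ = 2(CZ + ZC) − 4Z² with Z(0) = Z₀. Then Z(t) converges as t → ∞ to the positive part C⁺ of C (the matrix obtained by zeroing out all negative eigenvalues of C). -/

import Mathlib

open Matrix Filter Topology

/-- `Mfun C Z0 t = Z0⁻¹ + 4 ∫₀ᵗ e^{4Cs} ds` (the integral is taken entrywise). -/
noncomputable def Mfun {d : ℕ} (C Z0 : Matrix (Fin d) (Fin d) ℝ) (t : ℝ) :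
    Matrix (Fin d) (Fin d) ℝ :=
  Z0⁻¹ + Matrix.of fun i j =>
    4 * ∫ s in (0:ℝ)..t, (NormedSpace.exp ((4 * s) • C)) i j

/-- `Zfun C Z0 t = e^{2Ct} (Mfun C Z0 t)⁻¹ e^{2Ct}`, the solution of the Riccati
equation `Z' = 2(CZ + ZC) - 4Z²` with `Z(0) = Z0`. -/
noncomputable def Zfun {d : ℕ} (C Z0 : Matrix (Fin d) (Fin d) ℝ) (t : ℝ) :
    Matrix (Fin d) (Fin d) ℝ :=
  NormedSpace.exp ((2 * t) • C) * (Mfun C Z0 t)⁻¹ * NormedSpace.exp ((2 * t) • C)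

private lemma exp_neg_mul_tendsto {c : ℝ} (hc : c < 0) :
    Tendsto (fun t : ℝ => Real.exp (c * t)) atTop (𝓝 0) :=
  Real.tendsto_exp_atBot.comp ((tendsto_const_mul_atBot_of_neg hc).mpr tendsto_id)

private lemma integral_exp_cmul (c : ℝ) (hc : c ≠ 0) (t : ℝ) :
    ∫ s in (0:ℝ)..t, Real.exp (c * s) = (Real.exp (c * t) - 1) / c := by
  rw [intervalIntegral.integral_comp_mul_left (fun x => Real.exp x) hc]
  simp [integral_exp, Real.exp_zero, smul_eq_mul, div_eq_inv_mul]

private lemma exp_smul_eq {d : ℕ} (C U : Matrix (Fin d) (Fin d) ℝ) (lam : Fin d → ℝ)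
    (hU : Uᵀ * U = 1) (hUU : U * Uᵀ = 1) (hCdec : C = U * Matrix.diagonal lam * Uᵀ) (a : ℝ) :
    NormedSpace.exp (a • C) = U * Matrix.diagonal (fun k => Real.exp (a * lam k)) * Uᵀ := by
  have hUunit : IsUnit U := ⟨⟨U, Uᵀ, hUU, hU⟩, rfl⟩
  have hUinv : U⁻¹ = Uᵀ := Matrix.inv_eq_right_inv hUU
  have h1 : a • C = U * Matrix.diagonal (fun k => a * lam k) * U⁻¹ := by
    rw [hCdec, hUinv]
    rw [← Matrix.smul_mul, ← Matrix.mul_smul, ← Matrix.diagonal_smul]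
    rfl
  rw [h1, Matrix.exp_conj U _ hUunit, Matrix.exp_diagonal, hUinv]
  congr 2
  funext k
  rw [Pi.exp_def]; simp [← Real.exp_eq_exp_ℝ]

private lemma Mfun_eq {d : ℕ} (C Z0 U : Matrix (Fin d) (Fin d) ℝ) (lam : Fin d → ℝ)
    (hU : Uᵀ * U = 1) (hUU : U * Uᵀ = 1) (hCdec : C = U * Matrix.diagonal lam * Uᵀ)
    (hlam0 : ∀ k, lam k ≠ 0) (t : ℝ) :
    Mfun C Z0 t = U * (Uᵀ * Z0⁻¹ * U
      + Matrix.diagonal (fun k => (Real.exp (4 * lam k * t) - 1) / lam k)) * Uᵀ := by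
  have hA : U * (Uᵀ * Z0⁻¹ * U) * Uᵀ = Z0⁻¹ := by
    calc U * (Uᵀ * Z0⁻¹ * U) * Uᵀ = (U * Uᵀ) * Z0⁻¹ * (U * Uᵀ) := by
          noncomm_ring
      _ = Z0⁻¹ := by rw [hUU]; simp
  rw [Matrix.mul_add, Matrix.add_mul, hA]
  unfold Mfun
  congr 1
  ext i j
  have hint : ∀ s : ℝ, (NormedSpace.exp ((4 * s) • C)) i j
      = ∑ k, U i k * Real.exp ((4 * s) * lam k) * Uᵀ k j := by
    intro s
    rw [exp_smul_eq C U lam hU hUU hCdec (4 * s)]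
    simp [Matrix.mul_apply, Matrix.diagonal_apply, Matrix.transpose_apply, mul_ite, ite_mul,
      mul_zero, zero_mul, Finset.sum_ite_eq, Finset.sum_ite_eq']
  have hcont : ∀ k : Fin d, Continuous (fun s : ℝ => U i k * Real.exp ((4 * s) * lam k) * Uᵀ k j) := by
    intro k; fun_prop
  calc (Matrix.of fun i j => 4 * ∫ s in (0:ℝ)..t, (NormedSpace.exp ((4 * s) • C)) i j) i j
      = 4 * ∫ s in (0:ℝ)..t, ∑ k, U i k * Real.exp ((4 * s) * lam k) * Uᵀ k j := by
        simp only [Matrix.of_apply]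
        congr 1
        exact intervalIntegral.integral_congr (fun s _ => hint s)
    _ = 4 * ∑ k, ∫ s in (0:ℝ)..t, U i k * Real.exp ((4 * s) * lam k) * Uᵀ k j := by
        congr 1
        exact intervalIntegral.integral_finset_sum (fun k _ => (hcont k).intervalIntegrable _ _)
    _ = ∑ k, 4 * ∫ s in (0:ℝ)..t, U i k * Real.exp ((4 * s) * lam k) * Uᵀ k j := by
        rw [Finset.mul_sum]
    _ = (U * Matrix.diagonal (fun k => (Real.exp (4 * lam k * t) - 1) / lam k) * Uᵀ) i j := by
        have hR : (U * Matrix.diagonal (fun k => (Real.exp (4 * lam k * t) - 1) / lam k) * Uᵀ) i j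
            = ∑ k, U i k * ((Real.exp (4 * lam k * t) - 1) / lam k) * Uᵀ k j := by
          simp [Matrix.mul_apply, Matrix.diagonal_apply, Matrix.transpose_apply, mul_ite, ite_mul,
            mul_zero, zero_mul, Finset.sum_ite_eq, Finset.sum_ite_eq']
        rw [hR]
        refine Finset.sum_congr rfl (fun k _ => ?_)
        have h1 : (fun s : ℝ => U i k * Real.exp ((4 * s) * lam k) * Uᵀ k j)
            = fun s : ℝ => (U i k * Uᵀ k j) * Real.exp ((4 * lam k) * s) := by
          funext s; ring_nf
        have hl4 : (4 : ℝ) * lam k ≠ 0 := by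
          simpa using hlam0 k
        rw [h1, intervalIntegral.integral_const_mul, integral_exp_cmul _ hl4 t]
        have := hlam0 k
        field_simp

noncomputable def givf {d : ℕ} (lam : Fin d → ℝ) (t : ℝ) (k : Fin d) : ℝ :=
  if 0 < lam k then Real.exp (-(2 * lam k * t)) else 1

noncomputable def gvf {d : ℕ} (lam : Fin d → ℝ) (t : ℝ) (k : Fin d) : ℝ :=
  if 0 < lam k then Real.exp (2 * lam k * t) else 1

noncomputable def hvf {d : ℕ} (lam : Fin d → ℝ) (t : ℝ) (k : Fin d) : ℝ :=
  if 0 < lam k then 1 else Real.exp (2 * lam k * t)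

noncomputable def dvf {d : ℕ} (lam : Fin d → ℝ) (t : ℝ) (k : Fin d) : ℝ :=
  (Real.exp (4 * lam k * t) - 1) / lam k

noncomputable def pvf {d : ℕ} (lam : Fin d → ℝ) (k : Fin d) : ℝ :=
  if 0 < lam k then 1 else 0

noncomputable def mvf {d : ℕ} (lam : Fin d → ℝ) (k : Fin d) : ℝ :=
  if 0 < lam k then 0 else 1

noncomputable def Bmf {d : ℕ} (A : Matrix (Fin d) (Fin d) ℝ) (lam : Fin d → ℝ) (t : ℝ) :
    Matrix (Fin d) (Fin d) ℝ :=
  A + Matrix.diagonal (dvf lam t)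

noncomputable def Kmf {d : ℕ} (A : Matrix (Fin d) (Fin d) ℝ) (lam : Fin d → ℝ) (t : ℝ) :
    Matrix (Fin d) (Fin d) ℝ :=
  Matrix.diagonal (givf lam t) * Bmf A lam t * Matrix.diagonal (givf lam t)

noncomputable def Kinff {d : ℕ} (A : Matrix (Fin d) (Fin d) ℝ) (lam : Fin d → ℝ) :
    Matrix (Fin d) (Fin d) ℝ :=
  Matrix.diagonal (fun k => |lam k|⁻¹)
    + Matrix.diagonal (mvf lam) * A * Matrix.diagonal (mvf lam)

private lemma lam_neg {d : ℕ} {lam : Fin d → ℝ} (hlam0 : ∀ k, lam k ≠ 0) {k : Fin d}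
    (h : ¬ 0 < lam k) : lam k < 0 :=
  lt_of_le_of_ne (not_lt.mp h) (hlam0 k)

private lemma giv_tendsto {d : ℕ} (lam : Fin d → ℝ) (k : Fin d) :
    Tendsto (fun t : ℝ => givf lam t k) atTop (𝓝 (mvf lam k)) := by
  unfold givf mvf
  by_cases h : 0 < lam k
  · simp only [h, if_true]
    simpa [neg_mul] using exp_neg_mul_tendsto (c := -(2 * lam k)) (by linarith)
  · simp [h]

private lemma hv_tendsto {d : ℕ} (lam : Fin d → ℝ) (hlam0 : ∀ k, lam k ≠ 0) (k : Fin d) :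
    Tendsto (fun t : ℝ => hvf lam t k) atTop (𝓝 (pvf lam k)) := by
  unfold hvf pvf
  by_cases h : 0 < lam k
  · simp [h]
  · have hneg := lam_neg hlam0 h
    simp only [h, if_false]
    exact exp_neg_mul_tendsto (by linarith)

private lemma Km_apply {d : ℕ} (A : Matrix (Fin d) (Fin d) ℝ) (lam : Fin d → ℝ) (t : ℝ)
    (k l : Fin d) :
    Kmf A lam t k l
      = givf lam t k * (A k l + if k = l then dvf lam t k else 0) * givf lam t l := by
  simp [Kmf, Bmf, Matrix.diagonal_mul, Matrix.mul_diagonal, Matrix.add_apply,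
    Matrix.diagonal_apply]

private lemma Kinf_apply {d : ℕ} (A : Matrix (Fin d) (Fin d) ℝ) (lam : Fin d → ℝ)
    (k l : Fin d) :
    Kinff A lam k l
      = (if k = l then |lam k|⁻¹ else 0) + mvf lam k * A k l * mvf lam l := by
  simp [Kinff, Matrix.diagonal_mul, Matrix.mul_diagonal, Matrix.add_apply, Matrix.diagonal_apply]

private lemma K_entry_tendsto {d : ℕ} (A : Matrix (Fin d) (Fin d) ℝ) (lam : Fin d → ℝ)
    (hlam0 : ∀ k, lam k ≠ 0) (k l : Fin d) :
    Tendsto (fun t : ℝ => Kmf A lam t k l) atTop (𝓝 (Kinff A lam k l)) := by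
  by_cases hkl : k = l
  · subst hkl
    have e1 : ∀ t : ℝ, Kmf A lam t k k = givf lam t k * (A k k + dvf lam t k) * givf lam t k := by
      intro t; rw [Km_apply]; simp
    have e2 : Kinff A lam k k = |lam k|⁻¹ + mvf lam k * A k k * mvf lam k := by
      rw [Kinf_apply]; simp
    rw [e2]
    by_cases h : 0 < lam k
    · -- positive eigenvalue
      have hE : Tendsto (fun t : ℝ => Real.exp (-(2 * lam k * t))) atTop (𝓝 0) := by
        simpa [neg_mul] using exp_neg_mul_tendsto (c := -(2 * lam k)) (by linarith)
      have hfe : ∀ t : ℝ, givf lam t k * (A k k + dvf lam t k) * givf lam t k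
          = A k k * (Real.exp (-(2 * lam k * t)) * Real.exp (-(2 * lam k * t)))
            + (1 - Real.exp (-(2 * lam k * t)) * Real.exp (-(2 * lam k * t))) / lam k := by
        intro t
        have hx : Real.exp (2 * lam k * t) ≠ 0 := Real.exp_ne_zero _
        have h4 : Real.exp (4 * lam k * t)
            = Real.exp (2 * lam k * t) * Real.exp (2 * lam k * t) := by
          rw [← Real.exp_add]; ring_nf
        simp only [givf, dvf, if_pos h, Real.exp_neg, h4]
        field_simp
      have hlim : Tendsto (fun t : ℝ => A k k * (Real.exp (-(2 * lam k * t)) * Real.exp (-(2 * lam k * t)))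
            + (1 - Real.exp (-(2 * lam k * t)) * Real.exp (-(2 * lam k * t))) / lam k) atTop
          (𝓝 (A k k * (0 * 0) + (1 - 0 * 0) / lam k)) :=
        (tendsto_const_nhds.mul (hE.mul hE)).add
          ((tendsto_const_nhds.sub (hE.mul hE)).div_const _)
      have hv : A k k * (0 * 0 : ℝ) + (1 - 0 * 0) / lam k
          = |lam k|⁻¹ + mvf lam k * A k k * mvf lam k := by
        simp [mvf, if_pos h, abs_of_pos h, one_div]
      rw [← hv]
      exact (hlim.congr (fun t => (hfe t).symm)).congr (fun t => (e1 t).symm)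
    · -- negative eigenvalue
      have hneg := lam_neg hlam0 h
      have hE : Tendsto (fun t : ℝ => Real.exp (4 * lam k * t)) atTop (𝓝 0) :=
        exp_neg_mul_tendsto (by linarith)
      have hfe : ∀ t : ℝ, givf lam t k * (A k k + dvf lam t k) * givf lam t k
          = A k k + (Real.exp (4 * lam k * t) - 1) / lam k := by
        intro t
        simp [givf, dvf, if_neg h]
      have hlim : Tendsto (fun t : ℝ => A k k + (Real.exp (4 * lam k * t) - 1) / lam k) atTop
          (𝓝 (A k k + (0 - 1) / lam k)) :=
        tendsto_const_nhds.add ((hE.sub_const _).div_const _)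
      have hv : A k k + ((0 : ℝ) - 1) / lam k = |lam k|⁻¹ + mvf lam k * A k k * mvf lam k := by
        simp only [mvf, if_neg h, abs_of_neg hneg, one_mul, mul_one, inv_neg]
        ring
      rw [← hv]
      exact (hlim.congr (fun t => (hfe t).symm)).congr (fun t => (e1 t).symm)
  · have e1 : ∀ t : ℝ, Kmf A lam t k l = givf lam t k * A k l * givf lam t l := by
      intro t; rw [Km_apply]; simp [if_neg hkl]
    have e2 : Kinff A lam k l = mvf lam k * A k l * mvf lam l := by
      rw [Kinf_apply]; simp [if_neg hkl]
    rw [e2]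
    have hlim := ((giv_tendsto lam k).mul
      (tendsto_const_nhds : Tendsto (fun _ : ℝ => A k l) atTop (𝓝 (A k l)))).mul
      (giv_tendsto lam l)
    exact hlim.congr (fun t => (e1 t).symm)

private lemma Kinv_tendsto {d : ℕ} (A : Matrix (Fin d) (Fin d) ℝ) (lam : Fin d → ℝ)
    (hlam0 : ∀ k, lam k ≠ 0) (hdet : (Kinff A lam).det ≠ 0) (k l : Fin d) :
    Tendsto (fun t : ℝ => (Kmf A lam t)⁻¹ k l) atTop (𝓝 ((Kinff A lam)⁻¹ k l)) := by
  have hK : Tendsto (fun t : ℝ => Kmf A lam t) atTop (𝓝 (Kinff A lam)) := by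
    refine tendsto_pi_nhds.mpr fun k' => ?_
    rw [tendsto_pi_nhds]; intro l'
    exact K_entry_tendsto A lam hlam0 k' l'
  have hdetT : Tendsto (fun t : ℝ => (Kmf A lam t).det) atTop (𝓝 ((Kinff A lam).det)) :=
    ((continuous_id.matrix_det).tendsto _).comp hK
  have hadjM : Tendsto (fun t : ℝ => (Kmf A lam t).adjugate) atTop (𝓝 ((Kinff A lam).adjugate)) :=
    ((continuous_id.matrix_adjugate).tendsto _).comp hK
  have hadj : Tendsto (fun t : ℝ => (Kmf A lam t).adjugate k l) atTop
      (𝓝 ((Kinff A lam).adjugate k l)) :=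
    tendsto_pi_nhds.mp (tendsto_pi_nhds.mp hadjM k) l
  have he : ∀ M : Matrix (Fin d) (Fin d) ℝ, M⁻¹ k l = (M.det)⁻¹ * M.adjugate k l := by
    intro M
    rw [Matrix.inv_def]
    simp [Matrix.smul_apply, Ring.inverse_eq_inv, smul_eq_mul]
  simp only [he]
  exact (hdetT.inv₀ hdet).mul hadj

private lemma conj_posDef {d : ℕ} (Z U : Matrix (Fin d) (Fin d) ℝ) (hZ : Z.PosDef)
    (hU : Uᵀ * U = 1) : (Uᵀ * Z * U).PosDef := by
  have hH : Uᴴ = Uᵀ := by ext i j; simp [Matrix.conjTranspose_apply]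
  have hinj : Function.Injective U.mulVec := by
    intro x y hxy
    have := congrArg (Uᵀ *ᵥ ·) hxy
    simpa [Matrix.mulVec_mulVec, hU] using this
  have := hZ.conjTranspose_mul_mul_same hinj
  rwa [hH] at this

private lemma Kinf_posDef {d : ℕ} (A : Matrix (Fin d) (Fin d) ℝ) (lam : Fin d → ℝ)
    (hlam0 : ∀ k, lam k ≠ 0) (hA : A.PosDef) : (Kinff A lam).PosDef := by
  unfold Kinff
  apply Matrix.PosDef.add_posSemidef
  · exact Matrix.posDef_diagonal_iff.mpr fun k => inv_pos.mpr (abs_pos.mpr (hlam0 k))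
  · have h1 : (Matrix.diagonal (mvf lam))ᴴ = Matrix.diagonal (mvf lam) := by
      rw [Matrix.diagonal_conjTranspose, star_trivial]
    have h2 := hA.posSemidef.mul_mul_conjTranspose_same (Matrix.diagonal (mvf lam))
    rwa [h1] at h2

private lemma final_identity {d : ℕ} (A : Matrix (Fin d) (Fin d) ℝ) (lam : Fin d → ℝ)
    (hlam0 : ∀ k, lam k ≠ 0) (hdet : IsUnit (Kinff A lam).det) :
    Matrix.diagonal (pvf lam) * (Kinff A lam)⁻¹ * Matrix.diagonal (pvf lam)
      = Matrix.diagonal (fun k => max (lam k) 0) := by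
  have hKL : Kinff A lam * Matrix.diagonal (fun k => max (lam k) 0)
      = Matrix.diagonal (pvf lam) := by
    ext k l
    rw [Matrix.mul_diagonal, Kinf_apply, Matrix.diagonal_apply]
    by_cases hl : 0 < lam l
    · rw [max_eq_left hl.le]
      by_cases hkl : k = l
      · subst hkl
        simp [mvf, pvf, if_pos hl, abs_of_pos hl, inv_mul_cancel₀ (hlam0 k)]
      · simp [mvf, if_pos hl, if_neg hkl]
    · have hmax : max (lam l) 0 = 0 := max_eq_right (le_of_lt (lam_neg hlam0 hl))
      rw [hmax, mul_zero]
      by_cases hkl : k = l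
      · subst hkl; simp [pvf, if_neg hl]
      · simp [if_neg hkl]
  have hL : Matrix.diagonal (fun k => max (lam k) 0) = (Kinff A lam)⁻¹ * Matrix.diagonal (pvf lam) := by
    have h2 := congrArg (fun M => (Kinff A lam)⁻¹ * M) hKL
    simpa [← Matrix.mul_assoc, Matrix.nonsing_inv_mul _ hdet] using h2
  have hfun : (fun k => pvf lam k * max (lam k) 0) = fun k => max (lam k) 0 := by
    funext k
    by_cases h : 0 < lam k
    · simp [pvf, if_pos h]
    · simp [pvf, if_neg h, max_eq_right (le_of_lt (lam_neg hlam0 h))]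
  rw [Matrix.mul_assoc, ← hL, Matrix.diagonal_mul_diagonal, hfun]

/-- **Convergence of the Riccati/Oja flow to the positive part.** Let `C` be real
symmetric and invertible, with spectral decomposition `C = U * diagonal lam * Uᵀ`
(`U` orthogonal, `lam` nonincreasing), and positive part `Cp = U * diagonal (lam⁺) * Uᵀ`.
Let `Z0` be real symmetric positive definite. Then the solution
`Z(t) = e^{2Ct} (Z0⁻¹ + 4∫₀ᵗ e^{4Cs} ds)⁻¹ e^{2Ct}` of the Riccati equation
`Z' = 2(CZ + ZC) - 4Z²`, `Z(0) = Z0`, converges (entrywise) to `Cp` as `t → ∞`. -/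
theorem riccati_flow_tendsto_posPart
    (d : ℕ) (C Z0 : Matrix (Fin d) (Fin d) ℝ) (hC : C.IsSymm)
    (hCinv : IsUnit C.det)
    (hZ0 : Z0.IsSymm) (hZ0pd : Z0.PosDef)
    (U : Matrix (Fin d) (Fin d) ℝ) (lam : Fin d → ℝ)
    (hU : Uᵀ * U = 1) (hlam : Antitone lam)
    (hCdec : C = U * Matrix.diagonal lam * Uᵀ)
    (Cp : Matrix (Fin d) (Fin d) ℝ)
    (hCp : Cp = U * Matrix.diagonal (fun i => max (lam i) 0) * Uᵀ) :
    ∀ i j, Tendsto (fun t => Zfun C Z0 t i j) atTop (𝓝 (Cp i j)) := by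
  have hUU : U * Uᵀ = 1 := mul_eq_one_comm.mp hU
  have hUinv : U⁻¹ = Uᵀ := Matrix.inv_eq_right_inv hUU
  have hUTinv : Uᵀ⁻¹ = U := Matrix.inv_eq_right_inv hU
  have hdetC : C.det = ∏ k, lam k := by
    rw [hCdec, Matrix.det_mul, Matrix.det_mul, Matrix.det_diagonal, Matrix.det_transpose]
    have h1 : U.det * U.det = 1 := by
      have h2 := congrArg Matrix.det hUU
      rwa [Matrix.det_mul, Matrix.det_transpose, Matrix.det_one] at h2
    linear_combination (∏ k, lam k) * h1
  have hlam0 : ∀ k, lam k ≠ 0 := by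
    intro k hk
    have h0 : C.det = 0 := by
      rw [hdetC]
      exact Finset.prod_eq_zero (Finset.mem_univ k) hk
    exact hCinv.ne_zero h0
  set A := Uᵀ * Z0⁻¹ * U with hAdef
  have hApd : A.PosDef := conj_posDef Z0⁻¹ U hZ0pd.inv hU
  have hKinfPD := Kinf_posDef A lam hlam0 hApd
  have hdetK : IsUnit (Kinff A lam).det := isUnit_iff_ne_zero.mpr hKinfPD.det_pos.ne'
  have hM : ∀ t : ℝ, Mfun C Z0 t = U * Bmf A lam t * Uᵀ := by
    intro t
    rw [Mfun_eq C Z0 U lam hU hUU hCdec hlam0 t]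
    rfl
  have hGiGv : ∀ t : ℝ, Matrix.diagonal (gvf lam t) * Matrix.diagonal (givf lam t) = 1 := by
    intro t
    rw [Matrix.diagonal_mul_diagonal]
    have h1 : (fun k => gvf lam t k * givf lam t k) = fun _ => (1:ℝ) := by
      funext k
      by_cases h : 0 < lam k
      · simp [gvf, givf, if_pos h, ← Real.exp_add]
      · simp [gvf, givf, if_neg h]
    rw [h1, Matrix.diagonal_one]
  have hGvGi : ∀ t : ℝ, Matrix.diagonal (givf lam t) * Matrix.diagonal (gvf lam t) = 1 := by
    intro t
    rw [Matrix.diagonal_mul_diagonal]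
    have h1 : (fun k => givf lam t k * gvf lam t k) = fun _ => (1:ℝ) := by
      funext k
      by_cases h : 0 < lam k
      · simp [gvf, givf, if_pos h, ← Real.exp_add]
      · simp [gvf, givf, if_neg h]
    rw [h1, Matrix.diagonal_one]
  have hB_fact : ∀ t : ℝ, Bmf A lam t
      = Matrix.diagonal (gvf lam t) * Kmf A lam t * Matrix.diagonal (gvf lam t) := by
    intro t
    unfold Kmf
    simp only [← Matrix.mul_assoc]
    rw [hGiGv t, Matrix.one_mul, Matrix.mul_assoc, hGvGi t, Matrix.mul_one]
  have hMinv : ∀ t : ℝ, (Mfun C Z0 t)⁻¹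
      = U * (Matrix.diagonal (givf lam t) * (Kmf A lam t)⁻¹ * Matrix.diagonal (givf lam t)) * Uᵀ := by
    intro t
    have hGinv : (Matrix.diagonal (gvf lam t))⁻¹ = Matrix.diagonal (givf lam t) :=
      Matrix.inv_eq_right_inv (hGiGv t)
    rw [hM t, hB_fact t]
    rw [Matrix.mul_inv_rev, Matrix.mul_inv_rev, Matrix.mul_inv_rev, Matrix.mul_inv_rev,
      hUTinv, hUinv, hGinv]
    simp only [Matrix.mul_assoc]
  have hexp2 : ∀ t : ℝ, NormedSpace.exp ((2*t) • C)
      = U * Matrix.diagonal (fun k => gvf lam t k * hvf lam t k) * Uᵀ := by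
    intro t
    rw [exp_smul_eq C U lam hU hUU hCdec (2*t)]
    have h1 : (fun k => Real.exp ((2*t) * lam k)) = fun k => gvf lam t k * hvf lam t k := by
      funext k
      rw [show (2*t) * lam k = 2 * lam k * t by ring]
      by_cases h : 0 < lam k
      · simp [gvf, hvf, if_pos h]
      · simp [gvf, hvf, if_neg h]
    rw [h1]
  have hD1Gi : ∀ t : ℝ, Matrix.diagonal (fun k => gvf lam t k * hvf lam t k)
      * Matrix.diagonal (givf lam t) = Matrix.diagonal (hvf lam t) := by
    intro t
    rw [Matrix.diagonal_mul_diagonal]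
    have hfun : (fun k => (gvf lam t k * hvf lam t k) * givf lam t k) = hvf lam t := by
      funext k
      by_cases h : 0 < lam k
      · simp only [gvf, hvf, givf, if_pos h, mul_one, ← Real.exp_add, add_neg_cancel,
          Real.exp_zero]
      · simp only [gvf, hvf, givf, if_neg h, one_mul, mul_one]
    rw [hfun]
  have hGiD1 : ∀ t : ℝ, Matrix.diagonal (givf lam t)
      * Matrix.diagonal (fun k => gvf lam t k * hvf lam t k) = Matrix.diagonal (hvf lam t) := by
    intro t
    rw [Matrix.diagonal_mul_diagonal]
    have hfun : (fun k => givf lam t k * (gvf lam t k * hvf lam t k)) = hvf lam t := by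
      funext k
      by_cases h : 0 < lam k
      · simp only [gvf, hvf, givf, if_pos h, mul_one, ← Real.exp_add, neg_add_cancel,
          Real.exp_zero]
      · simp only [gvf, hvf, givf, if_neg h, one_mul, mul_one]
    rw [hfun]
  have hcanc : ∀ M : Matrix (Fin d) (Fin d) ℝ, Uᵀ * (U * M) = M := by
    intro M
    rw [← Matrix.mul_assoc, hU, Matrix.one_mul]
  have hZfun : ∀ t : ℝ, Zfun C Z0 t
      = U * (Matrix.diagonal (hvf lam t) * (Kmf A lam t)⁻¹ * Matrix.diagonal (hvf lam t)) * Uᵀ := by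
    intro t
    unfold Zfun
    rw [hexp2 t, hMinv t]
    simp only [Matrix.mul_assoc]
    rw [hcanc, hcanc]
    rw [← Matrix.mul_assoc (Matrix.diagonal fun k => gvf lam t k * hvf lam t k)
      (Matrix.diagonal (givf lam t)), hD1Gi t]
    rw [← Matrix.mul_assoc (Matrix.diagonal (givf lam t))
      (Matrix.diagonal fun k => gvf lam t k * hvf lam t k), hGiD1 t]
  intro i j
  have hS : ∀ t : ℝ, Zfun C Z0 t i j
      = ∑ l, (∑ k, U i k * (hvf lam t k * (Kmf A lam t)⁻¹ k l * hvf lam t l)) * Uᵀ l j := by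
    intro t
    rw [hZfun t, Matrix.mul_apply]
    refine Finset.sum_congr rfl fun l _ => ?_
    congr 1
    rw [Matrix.mul_apply]
    refine Finset.sum_congr rfl fun k _ => ?_
    congr 1
    rw [Matrix.mul_diagonal, Matrix.diagonal_mul]
  have hCpij : Cp i j
      = ∑ l, (∑ k, U i k * (pvf lam k * (Kinff A lam)⁻¹ k l * pvf lam l)) * Uᵀ l j := by
    have hfin := final_identity A lam hlam0 hdetK
    rw [hCp, ← hfin, Matrix.mul_apply]
    refine Finset.sum_congr rfl fun l _ => ?_
    congr 1
    rw [Matrix.mul_apply]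
    refine Finset.sum_congr rfl fun k _ => ?_
    congr 1
    rw [Matrix.mul_diagonal, Matrix.diagonal_mul]
  rw [hCpij]
  refine Tendsto.congr (fun t => (hS t).symm) ?_
  refine tendsto_finset_sum _ (fun l _ => ?_)
  refine Tendsto.mul ?_ tendsto_const_nhds
  refine tendsto_finset_sum _ (fun k _ => ?_)
  have h1 := hv_tendsto lam hlam0 k
  have h2 := hv_tendsto lam hlam0 l
  have h3 := Kinv_tendsto A lam hlam0 hKinfPD.det_pos.ne' k l
  exact tendsto_const_nhds.mul ((h1.mul h3).mul h2)
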